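/- Let k be a field, L a finite Galois field extension of k, and K an algebraically closed field containing L. For every integer n ≥ 0, the assignment sending an n-tuple (f_1, …, f_n) of k-algebra homomorphisms L → K to the restriction to the invariant subalgebra (L^{⊗_k n})^{Σ_n} of the k-algebra homomorphism f_1 ⊗ ⋯ ⊗ f_n : L^{⊗_k n} → K (determined on pure tensors by a_1 ⊗ ⋯ ⊗ a_n ↦ ∏_i f_i(a_i)) is invariant under permutation of the tuple, and the induced map from the quotient of (L →_{k-alg} K)^n by the permutation action of Σ_n (equivalently, from Sym^n of the set of k-algebra homomorphisms L → K) to the set of k-algebra homomorphisms (L^{⊗_k n})^{Σ_n} → K is a bijection. -/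

import Mathlib

open scoped TensorProduct
open PiTensorProduct

set_option synthInstance.maxHeartbeats 1000000
set_option maxHeartbeats 1000000

/-- For a commutative `k`-algebra `A` and a permutation `σ ∈ Σ_n`, the `k`-algebra
endomorphism of the `n`-fold tensor power `A^{⊗_k n} = ⨂[k] i : Fin n, A` permuting the
tensor factors along `σ`. -/
noncomputable def permAlgHom (k : Type*) [CommSemiring k] (A : Type*) [CommSemiring A]
    [Algebra k A] {n : ℕ} (σ : Equiv.Perm (Fin n)) :
    (⨂[k] _ : Fin n, A) →ₐ[k] (⨂[k] _ : Fin n, A) :=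
  PiTensorProduct.liftAlgHom ((PiTensorProduct.tprod k).domDomCongr σ)
    (by simp [PiTensorProduct.one_def]; rfl)
    (fun x y => by simp [MultilinearMap.domDomCongr_apply]; rfl)

/-- The subalgebra `(A^{⊗_k n})^{Σ_n}` of `Σ_n`-invariant elements of the `n`-fold tensor
power of a commutative `k`-algebra `A`. -/
noncomputable def symInvariants (k : Type*) [CommSemiring k] (A : Type*) [CommSemiring A]
    [Algebra k A] (n : ℕ) : Subalgebra k (⨂[k] _ : Fin n, A) :=
  ⨅ σ : Equiv.Perm (Fin n), AlgHom.equalizer (permAlgHom k A σ) (AlgHom.id k _)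

/-- Given an `n`-tuple `f` of `k`-algebra homomorphisms `L → K` (with `K` commutative),
the induced `k`-algebra homomorphism `f 1 ⊗ ⋯ ⊗ f n : L^{⊗_k n} → K`, determined on pure
tensors by `a₁ ⊗ ⋯ ⊗ aₙ ↦ ∏ i, f i aᵢ`. -/
noncomputable def prodAlgHom (k L K : Type*) [CommSemiring k] [CommSemiring L]
    [Algebra k L] [CommSemiring K] [Algebra k K] {n : ℕ} (f : Fin n → (L →ₐ[k] K)) :
    (⨂[k] _ : Fin n, L) →ₐ[k] K :=
  PiTensorProduct.liftAlgHom
    ((MultilinearMap.mkPiAlgebra k (Fin n) K).compLinearMap fun i => (f i).toLinearMap)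
    (by simp) (fun x y => by simp [Finset.prod_mul_distrib])

/-- The canonical map sending an `n`-tuple `f` of `k`-algebra homomorphisms `L → K` to the
restriction of `f 1 ⊗ ⋯ ⊗ f n : L^{⊗_k n} → K` to the invariant subalgebra
`(L^{⊗_k n})^{Σ_n}`. -/
noncomputable def restrictedProdAlgHom (k L K : Type*) [CommSemiring k] [CommSemiring L]
    [Algebra k L] [CommSemiring K] [Algebra k K] (n : ℕ) (f : Fin n → (L →ₐ[k] K)) :
    (symInvariants k L n) →ₐ[k] K :=
  (prodAlgHom k L K f).comp (symInvariants k L n).val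

section Aux

variable {k L K : Type*} [CommSemiring k] [CommSemiring L] [Algebra k L]
  [CommSemiring K] [Algebra k K] {n : ℕ}

lemma prodAlgHom_tprod (f : Fin n → (L →ₐ[k] K)) (a : Fin n → L) :
    prodAlgHom k L K f (tprod k a) = ∏ i, f i (a i) := by
  exact (PiTensorProduct.lift.tprod a).trans (by simp)

lemma permAlgHom_tprod (σ : Equiv.Perm (Fin n)) (a : Fin n → L) :
    permAlgHom k L σ (tprod k a) = tprod k (fun i => a (σ i)) := by
  simp [permAlgHom]

lemma prod_apply_mulSingle (h : Fin n → (L →ₐ[k] K)) (i : Fin n) (a : L) :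
    ∏ j, h j ((Pi.mulSingle i a : Fin n → L) j) = h i a := by
  rw [Finset.prod_eq_single i]
  · simp
  · intro j _ hj
    rw [Pi.mulSingle_eq_of_ne hj, _root_.map_one]
  · simp

lemma prodAlgHom_singleAlgHom (f : Fin n → (L →ₐ[k] K)) (i : Fin n) (a : L) :
    prodAlgHom k L K f (PiTensorProduct.singleAlgHom (R := k) (A := fun _ : Fin n => L) i a)
      = f i a := by
  rw [PiTensorProduct.singleAlgHom_apply, prodAlgHom_tprod]
  exact prod_apply_mulSingle f i a

lemma permAlgHom_singleAlgHom (σ : Equiv.Perm (Fin n)) (i : Fin n) (a : L) :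
    permAlgHom k L σ (PiTensorProduct.singleAlgHom (R := k) (A := fun _ : Fin n => L) i a)
      = PiTensorProduct.singleAlgHom (R := k) (A := fun _ : Fin n => L) (σ⁻¹ i) a := by
  rw [PiTensorProduct.singleAlgHom_apply, PiTensorProduct.singleAlgHom_apply, permAlgHom_tprod]
  congr 1
  funext j
  simp only [MonoidHom.mulSingle_apply]
  by_cases hj : j = σ⁻¹ i
  · subst hj
    rw [show σ (σ⁻¹ i) = i from σ.apply_symm_apply i]
    simp
  · rw [Pi.mulSingle_eq_of_ne hj, Pi.mulSingle_eq_of_ne]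
    intro hc
    exact hj (by simp [← hc])

lemma mem_symInvariants {x : ⨂[k] _ : Fin n, L} :
    x ∈ symInvariants k L n ↔ ∀ σ : Equiv.Perm (Fin n), permAlgHom k L σ x = x := by
  rw [symInvariants]
  simp only [Algebra.mem_iInf, AlgHom.mem_equalizer, AlgHom.id_apply]

end Aux

lemma piTensor_finite (k L : Type*) [CommSemiring k] [CommSemiring L] [Algebra k L]
    [Module.Finite k L] (n : ℕ) : Module.Finite k (⨂[k] _ : Fin n, L) := by
  induction n with
  | zero =>
    exact Module.Finite.equiv (PiTensorProduct.isEmptyEquiv (Fin 0)).symm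
  | succ n ih =>
    haveI := ih
    haveI : Module.Finite k (⨂[k] _ : Fin 1, L) :=
      Module.Finite.equiv (PiTensorProduct.subsingletonEquiv (0 : Fin 1)).symm
    haveI : Module.Finite k ((⨂[k] _ : Fin n, L) ⊗[k] (⨂[k] _ : Fin 1, L)) :=
      Module.Finite.tensorProduct k _ _
    exact Module.Finite.equiv
      ((PiTensorProduct.tmulEquiv (R := k) (M := L) (ι := Fin n) (ι₂ := Fin 1)).trans
        (PiTensorProduct.reindex k (fun _ => L) finSumFinEquiv))

lemma multiset_eq_of_esymm_eq {R : Type*} [CommRing R] [IsDomain R] (s t : Multiset R)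
    (hc : Multiset.card s = Multiset.card t) (h : ∀ m, s.esymm m = t.esymm m) : s = t := by
  have hp : (s.map fun a => Polynomial.X - Polynomial.C a).prod
      = (t.map fun a => Polynomial.X - Polynomial.C a).prod := by
    rw [Multiset.prod_X_sub_X_eq_sum_esymm, Multiset.prod_X_sub_X_eq_sum_esymm, hc]
    exact Finset.sum_congr rfl fun j _ => by rw [h]
  have := congrArg Polynomial.roots hp
  rwa [Polynomial.roots_multiset_prod_X_sub_C, Polynomial.roots_multiset_prod_X_sub_C] at this

lemma exists_comp_perm_eq {α : Type*} {n : ℕ} {f g : Fin n → α}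
    (h : Multiset.map f Finset.univ.val = Multiset.map g Finset.univ.val) :
    ∃ σ : Equiv.Perm (Fin n), f ∘ σ = g := by
  classical
  have hcard : ∀ c, Fintype.card {i // g i = c} = Fintype.card {i // f i = c} := by
    intro c
    have hcnt := congrArg (Multiset.count c) h
    rw [Multiset.count_map, Multiset.count_map] at hcnt
    simp only [Fintype.card_subtype]
    simp only [Finset.card_def, Finset.filter_val]
    have e1 : Multiset.filter (fun a => c = f a) Finset.univ.val
        = Multiset.filter (fun a => f a = c) Finset.univ.val := by
      apply Multiset.filter_congr; intro x _; exact eq_comm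
    have e2 : Multiset.filter (fun a => c = g a) Finset.univ.val
        = Multiset.filter (fun a => g a = c) Finset.univ.val := by
      apply Multiset.filter_congr; intro x _; exact eq_comm
    rw [e1, e2] at hcnt
    exact hcnt.symm
  have e : ∀ c, {i // g i = c} ≃ {i // f i = c} := fun c => Fintype.equivOfCardEq (hcard c)
  refine ⟨Equiv.ofFiberEquiv e, funext fun i => ?_⟩
  exact Equiv.ofFiberEquiv_map e i

section Aux2
variable {k L K : Type*} [CommSemiring k] [CommSemiring L] [Algebra k L]
  [CommSemiring K] [Algebra k K] {n : ℕ}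

lemma prodAlgHom_comp_perm (f : Fin n → (L →ₐ[k] K)) (σ : Equiv.Perm (Fin n)) :
    prodAlgHom k L K (f ∘ σ) = (prodAlgHom k L K f).comp (permAlgHom k L σ⁻¹) := by
  apply PiTensorProduct.algHom_ext
  intro i
  ext a
  simp only [AlgHom.comp_apply, prodAlgHom_singleAlgHom, permAlgHom_singleAlgHom, inv_inv,
    Function.comp_apply]

lemma restrictedProdAlgHom_comp_perm (f : Fin n → (L →ₐ[k] K)) (σ : Equiv.Perm (Fin n)) :
    restrictedProdAlgHom k L K n (f ∘ σ) = restrictedProdAlgHom k L K n f := by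
  apply AlgHom.ext
  rintro ⟨x, hx⟩
  show prodAlgHom k L K (f ∘ σ) x = prodAlgHom k L K f x
  rw [prodAlgHom_comp_perm f σ, AlgHom.comp_apply, mem_symInvariants.mp hx σ⁻¹]

end Aux2

section Aux3
variable {k L K : Type*} [CommSemiring k] [CommSemiring L] [Algebra k L]
  [CommSemiring K] [Algebra k K] {n : ℕ}

lemma esymmElem_mem (α : L) (m : ℕ) :
    (∑ T ∈ Finset.powersetCard m (Finset.univ : Finset (Fin n)),
      ∏ i ∈ T, PiTensorProduct.singleAlgHom (R := k) (A := fun _ : Fin n => L) i α)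
      ∈ symInvariants k L n := by
  classical
  rw [mem_symInvariants]
  intro σ
  rw [map_sum]
  have step : ∀ T ∈ Finset.powersetCard m (Finset.univ : Finset (Fin n)),
      permAlgHom k L σ (∏ i ∈ T,
          PiTensorProduct.singleAlgHom (R := k) (A := fun _ : Fin n => L) i α)
        = ∏ i ∈ T.image ⇑σ⁻¹,
            PiTensorProduct.singleAlgHom (R := k) (A := fun _ : Fin n => L) i α := by
    intro T _
    rw [map_prod, Finset.prod_image (fun a _ b _ h => (σ⁻¹ : Equiv.Perm (Fin n)).injective h)]
    exact Finset.prod_congr rfl fun i _ => permAlgHom_singleAlgHom σ i α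
  rw [Finset.sum_congr rfl step]
  refine Finset.sum_nbij' (fun T => T.image ⇑σ⁻¹) (fun T => T.image ⇑σ) ?_ ?_ ?_ ?_ ?_
  · intro T hT
    simp only [Finset.mem_powersetCard] at hT ⊢
    exact ⟨Finset.subset_univ _,
      by rw [Finset.card_image_of_injective _ (σ⁻¹ : Equiv.Perm (Fin n)).injective, hT.2]⟩
  · intro T hT
    simp only [Finset.mem_powersetCard] at hT ⊢
    exact ⟨Finset.subset_univ _,
      by rw [Finset.card_image_of_injective _ σ.injective, hT.2]⟩
  · intro T _
    simp only [Finset.image_image]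
    have : (⇑σ ∘ ⇑σ⁻¹) = id := by funext x; simp
    rw [this, Finset.image_id]
  · intro T _
    simp only [Finset.image_image]
    have : (⇑σ⁻¹ ∘ ⇑σ) = id := by funext x; simp
    rw [this, Finset.image_id]
  · intro T _; rfl

lemma prodAlgHom_esymmElem (f : Fin n → (L →ₐ[k] K)) (α : L) (m : ℕ) :
    prodAlgHom k L K f (∑ T ∈ Finset.powersetCard m (Finset.univ : Finset (Fin n)),
      ∏ i ∈ T, PiTensorProduct.singleAlgHom (R := k) (A := fun _ : Fin n => L) i α)
      = (Multiset.map (fun i => f i α) (Finset.univ : Finset (Fin n)).val).esymm m := by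
  rw [map_sum, Finset.esymm_map_val]
  refine Finset.sum_congr rfl fun T _ => ?_
  rw [map_prod]
  exact Finset.prod_congr rfl fun i _ => prodAlgHom_singleAlgHom f i α

end Aux3

set_option maxHeartbeats 4000000 in
lemma restrictedProdAlgHom_surjective (k L K : Type*) [Field k] [Field L]
    [Algebra k L] [IsGalois k L] [FiniteDimensional k L]
    [Field K] [IsAlgClosed K] [Algebra k K] [Algebra L K] [IsScalarTower k L K] (n : ℕ) :
    Function.Surjective (restrictedProdAlgHom k L K n) := by
  classical
  haveI hAfin : Module.Finite k (⨂[k] _ : Fin n, L) := piTensor_finite k L n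
  haveI : Algebra.IsIntegral k (⨂[k] _ : Fin n, L) := Algebra.IsIntegral.of_finite k _
  set S := symInvariants k L n with hS
  intro φ
  haveI : Module.Finite k S := by
    haveI : FiniteDimensional k (⨂[k] _ : Fin n, L) := hAfin
    exact FiniteDimensional.of_injective (Subalgebra.val S).toLinearMap Subtype.val_injective
  haveI : Algebra.IsIntegral S (⨂[k] _ : Fin n, L) :=
    ⟨fun x => (Algebra.IsIntegral.isIntegral (R := k) x).tower_top⟩
  set m : Ideal S := RingHom.ker φ.toRingHom with hm
  haveI hmp : m.IsPrime := RingHom.ker_isPrime _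
  haveI : Module.Finite k (S ⧸ m) :=
    Module.Finite.of_surjective (Ideal.Quotient.mkₐ k m).toLinearMap
      (Ideal.Quotient.mkₐ_surjective k m)
  haveI : Algebra.IsIntegral k (S ⧸ m) := Algebra.IsIntegral.of_finite k _
  have hinj : Function.Injective (algebraMap k (S ⧸ m)) := RingHom.injective _
  have hfield : IsField (S ⧸ m) :=
    (Algebra.IsIntegral.isField_iff_isField (R := k) (S := S ⧸ m) hinj).mp (Field.toIsField k)
  haveI hmmax : m.IsMaximal := Ideal.Quotient.maximal_of_isField m hfield
  obtain ⟨M, hMmax, hMcomap⟩ :=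
    Ideal.exists_ideal_over_maximal_of_isIntegral
      (R := S) (S := (⨂[k] _ : Fin n, L)) m (by
        intro x hx
        rw [RingHom.mem_ker] at hx
        have hx0 : (x : (⨂[k] _ : Fin n, L)) = 0 := by
          simpa [Subalgebra.algebraMap_eq] using hx
        have : x = 0 := Subtype.ext hx0
        rw [this]; exact zero_mem m)
  haveI := hMmax
  set j : (S ⧸ m) →+* ((⨂[k] _ : Fin n, L) ⧸ M) :=
    Ideal.quotientMap M (algebraMap S _) hMcomap.ge with hj
  letI : Algebra (S ⧸ m) ((⨂[k] _ : Fin n, L) ⧸ M) := j.toAlgebra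
  set φ' : (S ⧸ m) →+* K := Ideal.Quotient.lift m φ.toRingHom (fun a ha => ha) with hφ'
  letI : Algebra (S ⧸ m) K := φ'.toAlgebra
  haveI : Module.Finite k ((⨂[k] _ : Fin n, L) ⧸ M) :=
    Module.Finite.of_surjective (Ideal.Quotient.mkₐ k M).toLinearMap
      (Ideal.Quotient.mkₐ_surjective k M)
  haveI : Algebra.IsIntegral k ((⨂[k] _ : Fin n, L) ⧸ M) := Algebra.IsIntegral.of_finite k _
  haveI : IsScalarTower k (S ⧸ m) ((⨂[k] _ : Fin n, L) ⧸ M) := by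
    refine ⟨fun c x y => ?_⟩
    obtain ⟨s, rfl⟩ := Ideal.Quotient.mk_surjective x
    obtain ⟨a, rfl⟩ := Ideal.Quotient.mk_surjective y
    have h1 : c • (Ideal.Quotient.mk m s) = Ideal.Quotient.mk m (c • s) :=
      (map_smul (Ideal.Quotient.mkₐ k m) c s).symm
    have h2 : ∀ b : (⨂[k] _ : Fin n, L),
        Ideal.Quotient.mk M (c • b) = c • (Ideal.Quotient.mk M b) :=
      fun b => map_smul (Ideal.Quotient.mkₐ k M) c b
    have h3 : algebraMap S (⨂[k] _ : Fin n, L) (c • s)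
        = c • algebraMap S (⨂[k] _ : Fin n, L) s := Subalgebra.coe_smul S c s
    show (j (c • Ideal.Quotient.mk m s)) * (Ideal.Quotient.mk M a)
      = c • ((j (Ideal.Quotient.mk m s)) * (Ideal.Quotient.mk M a))
    rw [h1, hj, Ideal.quotientMap_mk, Ideal.quotientMap_mk, h3,
      h2 (algebraMap S (⨂[k] _ : Fin n, L) s), smul_mul_assoc]
  have hjinj : Function.Injective ⇑j := by
    letI : Field (S ⧸ m) := hfield.toField
    exact RingHom.injective j
  have hφ'inj : Function.Injective ⇑φ' := by
    letI : Field (S ⧸ m) := hfield.toField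
    exact RingHom.injective φ'
  haveI : @Module.IsTorsionFree (S ⧸ m) ((⨂[k] _ : Fin n, L) ⧸ M) _ _ Algebra.toModule :=
    Module.isTorsionFree_iff_algebraMap_injective.mpr hjinj
  haveI : @Module.IsTorsionFree (S ⧸ m) K _ _ Algebra.toModule :=
    Module.isTorsionFree_iff_algebraMap_injective.mpr hφ'inj
  haveI : Algebra.IsAlgebraic (S ⧸ m) ((⨂[k] _ : Fin n, L) ⧸ M) :=
    ⟨fun x => ((Algebra.IsIntegral.isIntegral (R := k) x).tower_top).isAlgebraic⟩
  set Ψ : ((⨂[k] _ : Fin n, L) ⧸ M) →ₐ[S ⧸ m] K := IsAlgClosed.lift (R := S ⧸ m) (S := (⨂[k] _ : Fin n, L) ⧸ M) (M := K) with hΨ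
  have hcomm : ∀ c : k,
      Ψ.toRingHom.comp (Ideal.Quotient.mk M) (algebraMap k (⨂[k] _ : Fin n, L) c)
        = algebraMap k K c := by
    intro c
    show Ψ (Ideal.Quotient.mk M (algebraMap k (⨂[k] _ : Fin n, L) c)) = algebraMap k K c
    rw [IsScalarTower.algebraMap_apply k S (⨂[k] _ : Fin n, L) c]
    have h1 : Ideal.Quotient.mk M (algebraMap S (⨂[k] _ : Fin n, L) (algebraMap k S c))
        = j (Ideal.Quotient.mk m (algebraMap k S c)) := (Ideal.quotientMap_mk).symm
    rw [h1]
    have h2 : Ψ (j (Ideal.Quotient.mk m (algebraMap k S c)))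
        = φ' (Ideal.Quotient.mk m (algebraMap k S c)) := Ψ.commutes _
    rw [h2, hφ']
    exact φ.commutes c
  set ψ : (⨂[k] _ : Fin n, L) →ₐ[k] K :=
    { Ψ.toRingHom.comp (Ideal.Quotient.mk M) with commutes' := hcomm } with hψ
  have hψS : ∀ s : S, ψ (s : (⨂[k] _ : Fin n, L)) = φ s := by
    intro s
    show Ψ (Ideal.Quotient.mk M ((s : (⨂[k] _ : Fin n, L)))) = φ s
    have h0 : (s : (⨂[k] _ : Fin n, L)) = algebraMap S (⨂[k] _ : Fin n, L) s := rfl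
    rw [h0]
    have h1 : Ideal.Quotient.mk M (algebraMap S (⨂[k] _ : Fin n, L) s)
        = j (Ideal.Quotient.mk m s) := (Ideal.quotientMap_mk).symm
    rw [h1]
    have h2 : Ψ (j (Ideal.Quotient.mk m s)) = φ' (Ideal.Quotient.mk m s) := Ψ.commutes _
    rw [h2, hφ']
    rfl
  refine ⟨fun i => ψ.comp (PiTensorProduct.singleAlgHom (R := k) (A := fun _ : Fin n => L) i),
    ?_⟩
  have hps : prodAlgHom k L K
      (fun i => ψ.comp (PiTensorProduct.singleAlgHom (R := k) (A := fun _ : Fin n => L) i))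
      = ψ := by
    apply PiTensorProduct.algHom_ext
    intro i
    ext a
    simp only [AlgHom.comp_apply, prodAlgHom_singleAlgHom]
  apply AlgHom.ext
  rintro ⟨x, hx⟩
  show prodAlgHom k L K _ x = φ ⟨x, hx⟩
  rw [hps]
  exact hψS ⟨x, hx⟩

set_option maxHeartbeats 4000000 in
lemma exists_perm_of_restrictedProdAlgHom_eq (k L K : Type*) [Field k] [Field L]
    [Algebra k L] [IsGalois k L] [FiniteDimensional k L]
    [Field K] [IsAlgClosed K] [Algebra k K] [Algebra L K] [IsScalarTower k L K] (n : ℕ)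
    (f g : Fin n → (L →ₐ[k] K))
    (hfg : restrictedProdAlgHom k L K n f = restrictedProdAlgHom k L K n g) :
    ∃ σ : Equiv.Perm (Fin n), f ∘ σ = g := by
  classical
  obtain ⟨α, hα⟩ := Field.exists_primitive_element k L
  have htop : Algebra.adjoin k {α} = ⊤ := by
    have h1 := IntermediateField.adjoin_toSubalgebra_of_isAlgebraic (F := k) (E := L) (S := {α})
      (fun x _ => Algebra.IsAlgebraic.isAlgebraic x)
    rw [hα, IntermediateField.top_toSubalgebra] at h1
    exact h1.symm
  have hev : Function.Injective (fun F : L →ₐ[k] K => F α) := by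
    intro F G hFG
    have hle : Algebra.adjoin k {α} ≤ AlgHom.equalizer F G :=
      Algebra.adjoin_le (Set.singleton_subset_iff.mpr hFG)
    apply AlgHom.ext
    intro x
    exact hle (htop ▸ Algebra.mem_top)
  have hesymm : ∀ m, (Multiset.map (fun i => f i α) (Finset.univ : Finset (Fin n)).val).esymm m
      = (Multiset.map (fun i => g i α) (Finset.univ : Finset (Fin n)).val).esymm m := by
    intro m
    have h := AlgHom.congr_fun hfg ⟨_, esymmElem_mem (k := k) (L := L) α m⟩
    have h' : prodAlgHom k L K f (∑ T ∈ Finset.powersetCard m (Finset.univ : Finset (Fin n)),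
          ∏ i ∈ T, PiTensorProduct.singleAlgHom (R := k) (A := fun _ : Fin n => L) i α)
        = prodAlgHom k L K g (∑ T ∈ Finset.powersetCard m (Finset.univ : Finset (Fin n)),
          ∏ i ∈ T, PiTensorProduct.singleAlgHom (R := k) (A := fun _ : Fin n => L) i α) := h
    rwa [prodAlgHom_esymmElem, prodAlgHom_esymmElem] at h'
  have hms : Multiset.map (fun i => f i α) (Finset.univ : Finset (Fin n)).val
      = Multiset.map (fun i => g i α) (Finset.univ : Finset (Fin n)).val :=
    multiset_eq_of_esymm_eq _ _ (by simp) hesymm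
  have hmf : Multiset.map f (Finset.univ : Finset (Fin n)).val
      = Multiset.map g (Finset.univ : Finset (Fin n)).val := by
    apply Multiset.map_injective hev
    rwa [Multiset.map_map, Multiset.map_map]
  exact exists_comp_perm_eq hmf

/-- Let `L/k` be a finite Galois extension and `K` an algebraically closed field containing
`L` (compatibly with `k ⊆ L ⊆ K`). For every `n ≥ 0`: the homomorphism `f 1 ⊗ ⋯ ⊗ f n` is
given on pure tensors by `a ↦ ∏ i, f i aᵢ`; its restriction to `(L^{⊗_k n})^{Σ_n}` is
invariant under permutation of the tuple `f`; and the induced map from the quotient of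
`(L →ₐ[k] K)^n` by the permutation action of `Σ_n` (i.e. from `Sym^n (L →ₐ[k] K)`) to
`((L^{⊗_k n})^{Σ_n}) →ₐ[k] K` is a bijection (it is surjective, and two tuples have the
same image iff they differ by a permutation). -/
theorem restrictedProdAlgHom_bijective_on_sym (k L K : Type*) [Field k] [Field L]
    [Algebra k L] [IsGalois k L] [FiniteDimensional k L]
    [Field K] [IsAlgClosed K] [Algebra k K] [Algebra L K] [IsScalarTower k L K] (n : ℕ) :
    (∀ (f : Fin n → (L →ₐ[k] K)) (a : Fin n → L),
        prodAlgHom k L K f (PiTensorProduct.tprod k a) = ∏ i, f i (a i)) ∧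
    (∀ (f : Fin n → (L →ₐ[k] K)) (σ : Equiv.Perm (Fin n)),
        restrictedProdAlgHom k L K n (f ∘ σ) = restrictedProdAlgHom k L K n f) ∧
    Function.Surjective (restrictedProdAlgHom k L K n) ∧
    (∀ f g : Fin n → (L →ₐ[k] K),
        restrictedProdAlgHom k L K n f = restrictedProdAlgHom k L K n g →
          ∃ σ : Equiv.Perm (Fin n), f ∘ σ = g) :=
  ⟨fun f a => prodAlgHom_tprod f a, fun f σ => restrictedProdAlgHom_comp_perm f σ,
    restrictedProdAlgHom_surjective k L K n,
    fun f g hfg => exists_perm_of_restrictedProdAlgHom_eq k L K n f g hfg⟩
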